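/- arXiv:2006.11334 — 2 statements merged into one kernel-verified Lean document; each statement's English description precedes it below -/
import Mathlib

section
/- Let G be a simple graph on a countable vertex set that satisfies condition (A), and let M be a matching of G of maximal support, i.e., V(M) is not properly contained in the support of any other matching of G. Then M is a perfect matching of G. -/
namespace PaperMatchings

variable {V : Type*}

/-- The support of a set of edges: all vertices incident to some edge in `M`. -/
def supp (M : Set (Sym2 V)) : Set V := {v | ∃ e ∈ M, v ∈ e}

/-- `M` is a matching of `G`: a set of edges of `G` such that no vertex is
incident to more than one edge of `M`. -/
def IsMatching (G : SimpleGraph V) (M : Set (Sym2 V)) : Prop :=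
  M ⊆ G.edgeSet ∧ ∀ (v : V), ∀ e ∈ M, ∀ e' ∈ M, v ∈ e → v ∈ e' → e = e'

/-- A perfect matching: a matching whose support is all of `V`. -/
def IsPerfectMatching (G : SimpleGraph V) (M : Set (Sym2 V)) : Prop :=
  IsMatching G M ∧ supp M = Set.univ

/-- A (finite or infinite) path in `G`, given by its number of vertices `n : ℕ∞`
(`⊤` meaning infinite) and the enumeration `f` of its vertices: it is injective on
indices below `n` and consecutive vertices are adjacent. -/
def IsPath (G : SimpleGraph V) (n : ℕ∞) (f : ℕ → V) : Prop :=
  1 ≤ n ∧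
  (∀ i j : ℕ, (i : ℕ∞) < n → (j : ℕ∞) < n → f i = f j → i = j) ∧
  (∀ i : ℕ, ((i : ℕ∞) + 1) < n → G.Adj (f i) (f (i + 1)))

/-- The consecutive edges of the path lie alternately in `M` and outside `M`. -/
def IsAlternating (M : Set (Sym2 V)) (n : ℕ∞) (f : ℕ → V) : Prop :=
  ∀ i : ℕ, ((i : ℕ∞) + 2) < n →
    (s(f i, f (i + 1)) ∈ M ↔ s(f (i + 1), f (i + 2)) ∉ M)

/-- An `M`-augmenting path starting at `s`: an `M`-alternating path (with at least one
edge) starting at the unmatched vertex `s`, which is either infinite or ends at an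
unmatched vertex. -/
def IsAugmentingPath (G : SimpleGraph V) (M : Set (Sym2 V)) (n : ℕ∞) (f : ℕ → V)
    (s : V) : Prop :=
  IsPath G n f ∧ IsAlternating M n f ∧ 1 < n ∧ f 0 = s ∧ s ∉ supp M ∧
  ∀ k : ℕ, n = (k : ℕ∞) + 1 → f k ∉ supp M

/-- The path contains at least one edge of `M`. -/
def IsProper (M : Set (Sym2 V)) (n : ℕ∞) (f : ℕ → V) : Prop :=
  ∃ i : ℕ, ((i : ℕ∞) + 1) < n ∧ s(f i, f (i + 1)) ∈ M

/-- Condition (A): for every matching `M` and every vertex `s` not in the support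
of `M` there is an `M`-augmenting path starting at `s`. -/
def ConditionA (G : SimpleGraph V) : Prop :=
  ∀ M : Set (Sym2 V), IsMatching G M → ∀ s : V, s ∉ supp M →
    ∃ (n : ℕ∞) (f : ℕ → V), IsAugmentingPath G M n f s

/-- An independent matching: a matching admitting no proper augmenting path. -/
def IndepMatching (G : SimpleGraph V) (M : Set (Sym2 V)) : Prop :=
  IsMatching G M ∧
    ¬ ∃ (s : V) (n : ℕ∞) (f : ℕ → V), IsAugmentingPath G M n f s ∧ IsProper M n f

/-- The induced subgraph of `G` on the vertex set `S` (vertices outside `S`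
become isolated). -/
def restrict (G : SimpleGraph V) (S : Set V) : SimpleGraph V where
  Adj u v := G.Adj u v ∧ u ∈ S ∧ v ∈ S
  symm := by
    constructor
    intro u v h
    exact ⟨h.1.symm, h.2.2, h.2.1⟩
  loopless := by
    constructor
    intro v h
    exact (G.ne_of_adj h.1) rfl

/-- `W` is an independent subgraph of `G`: the induced subgraph `G[W]` has a perfect
matching (i.e. `G` has a matching with support exactly `W`) and every such matching
is an independent matching of `G`. -/
def IndepSubgraph (G : SimpleGraph V) (W : Set V) : Prop :=
  (∃ M, IsMatching G M ∧ supp M = W) ∧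
  ∀ M, IsMatching G M → supp M = W → IndepMatching G M

/-- The induced subgraph `G[W]` satisfies condition (A): for every matching of
`G[W]` and every vertex of `W` not in its support, there is an augmenting path
inside `G[W]`. -/
def ConditionAOn (G : SimpleGraph V) (W : Set V) : Prop :=
  ∀ M : Set (Sym2 V), IsMatching (restrict G W) M → ∀ s ∈ W, s ∉ supp M →
    ∃ (n : ℕ∞) (f : ℕ → V), IsAugmentingPath (restrict G W) M n f s


section Aux

variable {G : SimpleGraph V} {M : Set (Sym2 V)} {n : ℕ∞} {f : ℕ → V} {s : V}

private lemma augment (hM : IsMatching G M) (hp : IsAugmentingPath G M n f s) :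
    ∃ M' : Set (Sym2 V), IsMatching G M' ∧ supp M ⊂ supp M' := by
  obtain ⟨⟨hn1, hinj, hadj⟩, halt, hn, hf0, hsM, hend⟩ := hp
  -- basic cast/arith facts
  have hcast : ∀ i : ℕ, ((i : ℕ∞) + 1) = ((i + 1 : ℕ) : ℕ∞) := fun i =>
    (Nat.cast_add_one i).symm
  have hstep : ∀ i : ℕ, (i : ℕ∞) < (i : ℕ∞) + 1 := by
    intro i; rw [hcast]; exact_mod_cast Nat.lt_succ_self i
  have hvlt : ∀ i : ℕ, ((i : ℕ∞) + 1) < n → (i : ℕ∞) < n := fun i h =>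
    lt_trans (hstep i) h
  have hsucc : ∀ i : ℕ, (i : ℕ∞) < n → n ≠ (i : ℕ∞) + 1 → ((i : ℕ∞) + 1) < n := by
    intro i h hne
    exact lt_of_le_of_ne (Order.add_one_le_of_lt h) (Ne.symm hne)
  -- parity of path edges
  have hpar : ∀ i : ℕ, ((i : ℕ∞) + 1) < n → (s(f i, f (i + 1)) ∈ M ↔ Odd i) := by
    intro i
    induction i with
    | zero =>
      intro _
      have h0 : ¬ Odd 0 := by decide
      simp only [h0, iff_false]
      intro he
      exact hsM ⟨_, he, by rw [← hf0]; exact Sym2.mem_mk_left _ _⟩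
    | succ i ih =>
      intro h
      have h2 : ((i : ℕ∞) + 2) < n := by
        have : ((i + 1 : ℕ) : ℕ∞) + 1 = (i : ℕ∞) + 2 := by push_cast; ring
        rwa [this] at h
      have hvi : ((i : ℕ∞) + 1) < n := by
        refine lt_trans ?_ h2
        rw [hcast i]
        have : ((i : ℕ∞) + 2) = ((i + 2 : ℕ) : ℕ∞) := by push_cast; ring
        rw [this]
        exact_mod_cast Nat.lt_succ_self (i + 1)
      have halt' := halt i h2
      have hodd := ih hvi
      show s(f (i + 1), f (i + 2)) ∈ M ↔ Odd (i + 1)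
      rw [Nat.odd_add_one, ← hodd]
      tauto
  -- the M-edge of any path vertex is a path edge (of odd index)
  have hkey : ∀ j : ℕ, (j : ℕ∞) < n → ∀ e ∈ M, f j ∈ e →
      ∃ i : ℕ, ((i : ℕ∞) + 1) < n ∧ e = s(f i, f (i + 1)) ∧
        (j = i + 1 ∨ j = i) ∧ Odd i := by
    intro j hj e he hfe
    match j with
    | 0 => exact absurd ⟨e, he, hf0 ▸ hfe⟩ hsM
    | (k + 1) =>
      by_cases hcase : n = ((k + 1 : ℕ) : ℕ∞) + 1
      · exact absurd ⟨e, he, hfe⟩ (hend (k + 1) hcase)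
      · have hj1 : (((k + 1 : ℕ) : ℕ∞) + 1) < n := hsucc _ hj hcase
        have hvk : ((k : ℕ∞) + 1) < n := by rw [hcast]; exact hvlt _ hj1
        rcases Nat.even_or_odd k with hk | hk
        · -- k even, so k+1 odd; the M-edge at f (k+1) is edge k+1
          have hodd : Odd (k + 1) := Nat.odd_add_one.mpr (Nat.not_odd_iff_even.mpr hk)
          have hmem : s(f (k + 1), f (k + 2)) ∈ M := (hpar (k + 1) hj1).mpr hodd
          have : e = s(f (k + 1), f (k + 2)) :=
            hM.2 (f (k + 1)) e he _ hmem hfe (Sym2.mem_mk_left _ _)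
          exact ⟨k + 1, hj1, this, Or.inr rfl, hodd⟩
        · -- k odd; the M-edge at f (k+1) is edge k
          have hmem : s(f k, f (k + 1)) ∈ M := (hpar k hvk).mpr hk
          have : e = s(f k, f (k + 1)) :=
            hM.2 (f (k + 1)) e he _ hmem hfe (Sym2.mem_mk_right _ _)
          exact ⟨k, hvk, this, Or.inl rfl, hk⟩
  -- the switched matching
  set M' : Set (Sym2 V) :=
    {e | (e ∈ M ∧ ∀ i : ℕ, ((i : ℕ∞) + 1) < n → e ≠ s(f i, f (i + 1))) ∨
      ∃ i : ℕ, ((i : ℕ∞) + 1) < n ∧ Even i ∧ e = s(f i, f (i + 1))} with hM'def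
  -- membership in M' of even path edges
  have heven_mem : ∀ i : ℕ, ((i : ℕ∞) + 1) < n → Even i → s(f i, f (i + 1)) ∈ M' :=
    fun i h hev => Or.inr ⟨i, h, hev, rfl⟩
  -- a vertex of a valid edge index is on the path, with index < n
  have hM' : IsMatching G M' := by
    constructor
    · rintro e (⟨he, -⟩ | ⟨i, hi, -, rfl⟩)
      · exact hM.1 he
      · exact (G.mem_edgeSet).mpr (hadj i hi)
    · rintro v a (⟨ha, hanp⟩ | ⟨i, hi, hei, rfl⟩) b (⟨hb, hbnp⟩ | ⟨j, hj, hej, rfl⟩)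
        hva hvb
      · exact hM.2 v a ha b hb hva hvb
      · -- a ∈ M off the path, b an even path edge: impossible
        exfalso
        rcases Sym2.mem_iff.mp hvb with hv | hv
        · obtain ⟨i', hi', he', -⟩ := hkey j (hvlt j hj) a ha (hv ▸ hva)
          exact hanp i' hi' he'
        · have hjn : ((j + 1 : ℕ) : ℕ∞) < n := by rw [← hcast]; exact hj
          obtain ⟨i', hi', he', -⟩ := hkey (j + 1) hjn a ha (hv ▸ hva)
          exact hanp i' hi' he'
      · exfalso
        rcases Sym2.mem_iff.mp hva with hv | hv
        · obtain ⟨i', hi', he', -⟩ := hkey i (hvlt i hi) b hb (hv ▸ hvb)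
          exact hbnp i' hi' he'
        · have hin : ((i + 1 : ℕ) : ℕ∞) < n := by rw [← hcast]; exact hi
          obtain ⟨i', hi', he', -⟩ := hkey (i + 1) hin b hb (hv ▸ hvb)
          exact hbnp i' hi' he'
      · -- both even path edges
        have hidx : ∀ p q : ℕ, (p : ℕ∞) < n → (q : ℕ∞) < n → f p = f q → p = q :=
          hinj
        have hiin : ((i + 1 : ℕ) : ℕ∞) < n := by rw [← hcast]; exact hi
        have hjjn : ((j + 1 : ℕ) : ℕ∞) < n := by rw [← hcast]; exact hj
        have hij : i = j := by
          rcases Sym2.mem_iff.mp hva with hv | hv <;>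
            rcases Sym2.mem_iff.mp hvb with hw | hw
          · exact hidx i j (hvlt i hi) (hvlt j hj) (hv.symm.trans hw)
          · have := hidx i (j + 1) (hvlt i hi) hjjn (hv.symm.trans hw)
            rw [Nat.even_iff] at hei hej; omega
          · have := hidx (i + 1) j hiin (hvlt j hj) (hv.symm.trans hw)
            rw [Nat.even_iff] at hei hej; omega
          · have := hidx (i + 1) (j + 1) hiin hjjn (hv.symm.trans hw)
            omega
        rw [hij]
  -- supp M ⊆ supp M'
  have hsub : supp M ⊆ supp M' := by
    rintro v ⟨e, he, hv⟩
    by_cases hP : ∃ i : ℕ, ((i : ℕ∞) + 1) < n ∧ e = s(f i, f (i + 1))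
    · obtain ⟨i, hi, rfl⟩ := hP
      have hodd : Odd i := (hpar i hi).mp he
      rcases Sym2.mem_iff.mp hv with hv' | hv'
      · -- v = f i, i odd, use edge i - 1
        obtain ⟨k, rfl⟩ : ∃ k, i = k + 1 := ⟨i - 1, by have := Nat.odd_iff.mp hodd; omega⟩
        have hvk : ((k : ℕ∞) + 1) < n := by rw [hcast]; exact hvlt _ hi
        refine ⟨s(f k, f (k + 1)), heven_mem k hvk ?_, ?_⟩
        · rw [Nat.odd_add_one] at hodd; exact Nat.not_odd_iff_even.mp hodd
        · rw [hv']; exact Sym2.mem_mk_right _ _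
      · -- v = f (i + 1), i + 1 even, use edge i + 1 (exists since f (i+1) ∈ supp M)
        have hne : n ≠ ((i + 1 : ℕ) : ℕ∞) + 1 := by
          intro hcase
          exact (hend (i + 1) hcase) ⟨_, he, hv' ▸ hv⟩
        have hin : ((i + 1 : ℕ) : ℕ∞) < n := by rw [← hcast]; exact hi
        have hv1 : (((i + 1 : ℕ) : ℕ∞) + 1) < n := hsucc _ hin hne
        refine ⟨s(f (i + 1), f (i + 2)), heven_mem (i + 1) hv1 ?_, ?_⟩
        · rw [Nat.even_add_one, Nat.not_even_iff_odd]; exact hodd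
        · rw [hv']; exact Sym2.mem_mk_left _ _
    · exact ⟨e, Or.inl ⟨he, fun i hi hei => hP ⟨i, hi, hei⟩⟩, hv⟩
  -- s ∈ supp M' \ supp M
  have h0 : ((0 : ℕ∞) + 1) < n := by rw [zero_add]; exact hn
  have hs' : s ∈ supp M' :=
    ⟨s(f 0, f 1), heven_mem 0 h0 Even.zero, by rw [← hf0]; exact Sym2.mem_mk_left _ _⟩
  exact ⟨M', hM', hsub, fun hba => hsM (hba hs')⟩

end Aux

/-- In a graph satisfying condition (A), any matching of maximal
support is perfect. -/
theorem maximal_matching_is_perfect {V : Type*} [Countable V] (G : SimpleGraph V)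
    (hA : ConditionA G) (M : Set (Sym2 V)) (hM : IsMatching G M)
    (hmax : ∀ M' : Set (Sym2 V), IsMatching G M' → ¬ supp M ⊂ supp M') :
    IsPerfectMatching G M := by
  refine ⟨hM, ?_⟩
  by_contra h
  obtain ⟨s, -, hs⟩ := Set.exists_of_ssubset (Set.ssubset_univ_iff.mpr h)
  obtain ⟨n, f, hp⟩ := hA M hM s hs
  obtain ⟨M', hM', hlt⟩ := augment hM hp
  exact hmax M' hM' hlt

end PaperMatchings
end

section
/- Let G be a simple graph on a countable vertex set. Then G satisfies condition (A) if and only if for every independent subgraph W of G and every vertex s ∈ V \ W, there exists a vertex v ∈ V \ W with {s, v} an edge of G. -/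
namespace PaperMatchings

variable {V : Type*}

/-! ### Auxiliary development -/

section Aux

variable {G : SimpleGraph V} {M : Set (Sym2 V)} {s : V}

lemma mem_supp_iff {v : V} : v ∈ supp M ↔ ∃ e ∈ M, v ∈ e := Iff.rfl

lemma matching_unique (hM : IsMatching G M) {v : V} {e e' : Sym2 V}
    (he : e ∈ M) (he' : e' ∈ M) (hv : v ∈ e) (hv' : v ∈ e') : e = e' :=
  hM.2 v e he e' he' hv hv'

lemma matching_adj (hM : IsMatching G M) {a b : V} (h : s(a, b) ∈ M) : G.Adj a b := by
  have := hM.1 h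
  rwa [SimpleGraph.mem_edgeSet] at this

/-- A finite `M`-alternating path from `s` with `m` edges: edge `i` is in `M` iff `i` is odd. -/
def AltP (G : SimpleGraph V) (M : Set (Sym2 V)) (s : V) (m : ℕ) (q : ℕ → V) : Prop :=
  q 0 = s ∧ (∀ i j, i ≤ m → j ≤ m → q i = q j → i = j) ∧
  (∀ i, i < m → G.Adj (q i) (q (i + 1))) ∧
  (∀ i, i < m → (s(q i, q (i + 1)) ∈ M ↔ Odd i))

/-- The set of vertices reachable from `s` by a nontrivial alternating path. -/
def Wset (G : SimpleGraph V) (M : Set (Sym2 V)) (s : V) : Set V :=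
  {v | ∃ m q, AltP G M s m q ∧ 1 ≤ m ∧ q m = v}

lemma AltP.trunc {m q} (h : AltP G M s m q) {m' : ℕ} (hm' : m' ≤ m) : AltP G M s m' q :=
  ⟨h.1, fun i j hi hj => h.2.1 i j (hi.trans hm') (hj.trans hm'),
   fun i hi => h.2.2.1 i (lt_of_lt_of_le hi hm'), fun i hi => h.2.2.2 i (lt_of_lt_of_le hi hm')⟩

lemma s_not_Wset : s ∉ Wset G M s := by
  rintro ⟨m, q, hq, hm, hqm⟩
  have := hq.2.1 m 0 le_rfl (Nat.zero_le _) (by rw [hqm, hq.1])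
  omega

lemma mem_Wset_of_altp {m q} (h : AltP G M s m q) (hm : 1 ≤ m) : q m ∈ Wset G M s :=
  ⟨m, q, h, hm, rfl⟩

lemma enat_coe_lt_coe {a b : ℕ} : (a : ℕ∞) < (b : ℕ∞) ↔ a < b := Nat.cast_lt

lemma enat_lt_of_succ_lt {a : ℕ} {n : ℕ∞} (h : (a : ℕ∞) + 1 < n) : (a : ℕ∞) < n :=
  lt_of_le_of_lt le_self_add h

lemma enat_succ_lt_of_lt_of_ne {a : ℕ} {n : ℕ∞} (h : (a : ℕ∞) < n)
    (hne : n ≠ (a : ℕ∞) + 1) : (a : ℕ∞) + 1 < n :=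
  lt_of_le_of_ne (Order.add_one_le_of_lt h) (Ne.symm hne)

lemma enat_cast_add_one (a : ℕ) : (a : ℕ∞) + 1 = ((a + 1 : ℕ) : ℕ∞) := by push_cast; rfl

/-- Convert a finite alternating path ending at an unmatched vertex into an augmenting path. -/
lemma altp_to_aug {m q} (h : AltP G M s m q) (hm : 1 ≤ m) (hs : s ∉ supp M)
    (hend : q m ∉ supp M) : ∃ n f, IsAugmentingPath G M n f s := by
  refine ⟨((m + 1 : ℕ) : ℕ∞), q, ⟨?_, ?_, ?_⟩, ?_, ?_, h.1, hs, ?_⟩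
  · exact_mod_cast Nat.succ_le_succ (Nat.zero_le m)
  · intro i j hi hj hij
    exact h.2.1 i j (by exact_mod_cast Nat.lt_succ_iff.mp (enat_coe_lt_coe.mp hi))
      (by exact_mod_cast Nat.lt_succ_iff.mp (enat_coe_lt_coe.mp hj)) hij
  · intro i hi
    rw [enat_cast_add_one, enat_coe_lt_coe] at hi
    exact h.2.2.1 i (by omega)
  · intro i hi
    rw [show ((i : ℕ∞) + 2) = ((i + 2 : ℕ) : ℕ∞) by push_cast; ring, enat_coe_lt_coe] at hi
    have h1 := h.2.2.2 i (by omega)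
    have h2 := h.2.2.2 (i + 1) (by omega)
    rw [h1, h2, Nat.odd_add_one]
    tauto
  · exact_mod_cast Nat.succ_lt_succ (Nat.lt_of_lt_of_le Nat.zero_lt_one hm)
  · intro k hk
    rw [enat_cast_add_one, Nat.cast_inj] at hk
    have : k = m := by omega
    rwa [this]

/-- An infinite alternating path from `s` gives an augmenting path. -/
lemma altp_inf_to_aug {q : ℕ → V} (h0 : q 0 = s) (hinj : Function.Injective q)
    (hadj : ∀ i, G.Adj (q i) (q (i + 1))) (hpat : ∀ i, (s(q i, q (i + 1)) ∈ M ↔ Odd i))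
    (hs : s ∉ supp M) : ∃ n f, IsAugmentingPath G M n f s := by
  refine ⟨⊤, q, ⟨le_top, fun i j _ _ hij => hinj hij, fun i _ => hadj i⟩, ?_, ?_, h0, hs, ?_⟩
  · intro i _
    rw [hpat i, hpat (i + 1), Nat.odd_add_one]
    tauto
  · exact lt_of_lt_of_le (by exact_mod_cast Nat.one_lt_two) (le_top : ((2:ℕ) : ℕ∞) ≤ ⊤)
  · intro k hk
    exact absurd hk.symm (by rw [enat_cast_add_one]; exact ENat.coe_ne_top _)

/-- Any `G`-neighbor of `s` is reachable. -/
lemma adj_mem_Wset (hM : IsMatching G M) (hs : s ∉ supp M) {v : V} (hadj : G.Adj s v) :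
    v ∈ Wset G M s := by
  have hne : s ≠ v := hadj.ne
  refine ⟨1, fun k => if k = 0 then s else v, ⟨by simp, ?_, ?_, ?_⟩, le_rfl, by simp⟩
  · intro i j hi hj hij
    interval_cases i <;> interval_cases j <;> simp_all
  · intro i hi
    interval_cases i; simpa using hadj
  · intro i hi
    interval_cases i
    simp only [if_pos rfl, one_ne_zero, if_neg]
    constructor
    · intro hmem
      exact absurd ⟨_, hmem, Sym2.mem_mk_left _ _⟩ hs
    · intro hodd; exact absurd hodd (by simp)

/-- Key closure lemma: assuming no augmenting path from `s`, every reachable vertex is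
matched, with its partner also reachable. -/
lemma Wset_closed (hM : IsMatching G M) (hs : s ∉ supp M)
    (NA : ¬∃ n f, IsAugmentingPath G M n f s) {v : V} (hv : v ∈ Wset G M s) :
    ∃ w ∈ Wset G M s, s(v, w) ∈ M := by
  obtain ⟨m, q, hq, hm, rfl⟩ := hv
  obtain ⟨j, rfl⟩ : ∃ j, m = j + 1 := ⟨m - 1, by omega⟩
  by_cases hlast : s(q j, q (j + 1)) ∈ M
  · -- the last edge is in M; partner is the previous vertex
    have hodd : Odd j := (hq.2.2.2 j (by omega)).mp hlast
    have hj1 : 1 ≤ j := by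
      rcases hodd with ⟨c, hc⟩; omega
    exact ⟨q j, ⟨j, q, hq.trunc (by omega), hj1, rfl⟩, Sym2.eq_swap ▸ hlast⟩
  · -- the last edge is not in M; v must be matched (else augmenting path), extend
    have hvM : q (j + 1) ∈ supp M := by
      by_contra hnm
      exact NA (altp_to_aug hq hm hs hnm)
    obtain ⟨e, he, hve⟩ := hvM
    obtain ⟨w, rfl⟩ := Sym2.mem_iff_exists.mp hve
    have hwM : w ∈ supp M := ⟨_, he, Sym2.mem_mk_right _ _⟩
    have hnl : q (j + 1) ≠ w := (matching_adj hM he).ne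
    -- w is not on the path
    have hfresh : ∀ i, i ≤ j + 1 → q i ≠ w := by
      intro i hi hqi
      have hilt : i < j + 1 := by
        rcases Nat.lt_or_ge i (j + 1) with h' | h'
        · exact h'
        · exfalso; apply hnl; rw [← hqi]; congr 1; omega
      rcases Nat.eq_zero_or_pos i with rfl | hipos
      · rw [hq.1] at hqi
        exact hs ⟨_, he, hqi ▸ Sym2.mem_mk_right _ _⟩
      · obtain ⟨r, rfl⟩ : ∃ r, i = r + 1 := ⟨i - 1, by omega⟩
        rcases Nat.even_or_odd r with hre | hro
        · -- edge r+1 is in M and contains w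
          have hrodd : Odd (r + 1) := by rwa [Nat.odd_add_one, Nat.not_odd_iff_even]
          have hrm : s(q (r + 1), q (r + 2)) ∈ M := by
            by_cases hreq : r + 1 < j + 1
            · exact (hq.2.2.2 (r + 1) hreq).mpr hrodd
            · omega
          have : r + 2 ≤ j + 1 := by
            by_contra hcon
            have : r + 1 = j := by omega
            exact hlast (this ▸ hrm)
          have heq := matching_unique hM hrm he (hqi ▸ Sym2.mem_mk_left _ _)
            (Sym2.mem_mk_right _ _)
          -- s(q(r+1), q(r+2)) = s(q(j+1), w), with q(r+1) = w
          rw [Sym2.eq_iff] at heq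
          rcases heq with ⟨h1, h2⟩ | ⟨h1, h2⟩
          · -- q (r+1) = q (j+1): impossible unless r+1 = j+1
            have := hq.2.1 (r + 1) (j + 1) (by omega) le_rfl h1
            omega
          · -- q (r+2) = q (j+1)
            have := hq.2.1 (r + 2) (j + 1) (by omega) le_rfl h2
            have : r + 1 = j := by omega
            exact hlast (this ▸ hrm)
        · -- edge r is in M and contains w
          have hrm : s(q r, q (r + 1)) ∈ M := (hq.2.2.2 r (by omega)).mpr hro
          have heq := matching_unique hM hrm he (hqi ▸ Sym2.mem_mk_right _ _)
            (Sym2.mem_mk_right _ _)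
          rw [Sym2.eq_iff] at heq
          rcases heq with ⟨h1, h2⟩ | ⟨h1, h2⟩
          · have := hq.2.1 r (j + 1) (by omega) le_rfl h1
            omega
          · have := hq.2.1 (r + 1) (j + 1) (by omega) le_rfl h2
            have hrj : r = j := by omega
            exact hlast (hrj ▸ hrm)
    -- extend the path by w
    set q' : ℕ → V := fun k => if k = j + 2 then w else q k with hq'def
    have hq'eq : ∀ k, k ≤ j + 1 → q' k = q k := by
      intro k hk; simp only [hq'def]; rw [if_neg (by omega)]
    have hAlt : AltP G M s (j + 2) q' := by
      refine ⟨by rw [hq'eq 0 (by omega)]; exact hq.1, ?_, ?_, ?_⟩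
      · intro a b ha hb hab
        rcases Nat.lt_or_ge a (j + 2) with ha' | ha' <;> rcases Nat.lt_or_ge b (j + 2) with hb' | hb'
        · rw [hq'eq a (by omega), hq'eq b (by omega)] at hab
          exact hq.2.1 a b (by omega) (by omega) hab
        · have hb2 : b = j + 2 := by omega
          subst hb2
          rw [hq'eq a (by omega)] at hab
          simp only [hq'def, if_pos rfl] at hab
          exact absurd hab (hfresh a (by omega))
        · have ha2 : a = j + 2 := by omega
          subst ha2
          rw [hq'eq b (by omega)] at hab
          simp only [hq'def, if_pos rfl] at hab
          exact absurd hab.symm (hfresh b (by omega))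
        · omega
      · intro i hi
        rcases Nat.lt_or_ge i (j + 1) with hi' | hi'
        · rw [hq'eq i (by omega), hq'eq (i + 1) (by omega)]
          exact hq.2.2.1 i hi'
        · have : i = j + 1 := by omega
          subst this
          rw [hq'eq (j + 1) le_rfl]
          simp only [hq'def, if_pos rfl]
          exact matching_adj hM he
      · intro i hi
        rcases Nat.lt_or_ge i (j + 1) with hi' | hi'
        · rw [hq'eq i (by omega), hq'eq (i + 1) (by omega)]
          exact hq.2.2.2 i hi'
        · have : i = j + 1 := by omega
          subst this
          rw [hq'eq (j + 1) le_rfl]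
          simp only [hq'def, if_pos rfl]
          have hjodd : Odd (j + 1) := by
            rw [Nat.odd_add_one, Nat.not_odd_iff_even]
            rcases Nat.even_or_odd j with h' | h'
            · exact h'
            · exact absurd ((hq.2.2.2 j (by omega)).mpr h') hlast
          exact ⟨fun _ => hjodd, fun _ => he⟩
    refine ⟨w, ⟨j + 2, q', hAlt, by omega, by simp [hq'def]⟩, he⟩

/-- An `M`-edge meeting the reachable set lies entirely inside it. -/
lemma edge_sub_Wset (hM : IsMatching G M) (hs : s ∉ supp M)
    (NA : ¬∃ n f, IsAugmentingPath G M n f s) {e : Sym2 V} {v : V}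
    (he : e ∈ M) (hve : v ∈ e) (hv : v ∈ Wset G M s) : ∀ x ∈ e, x ∈ Wset G M s := by
  obtain ⟨w, hw, hvw⟩ := Wset_closed hM hs NA hv
  have : e = s(v, w) := matching_unique hM he hvw hve (Sym2.mem_mk_left _ _)
  subst this
  intro x hx
  rcases Sym2.mem_iff.mp hx with rfl | rfl
  · exact hv
  · exact hw

/-- The restriction of `M` to the reachable set. -/
def M0 (G : SimpleGraph V) (M : Set (Sym2 V)) (s : V) : Set (Sym2 V) :=
  {e | e ∈ M ∧ ∃ v ∈ e, v ∈ Wset G M s}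

lemma M0_sub : M0 G M s ⊆ M := fun _ he => he.1

lemma M0_matching (hM : IsMatching G M) : IsMatching G (M0 G M s) :=
  ⟨fun _ he => hM.1 he.1, fun v e he e' he' hv hv' => hM.2 v e he.1 e' he'.1 hv hv'⟩

lemma mem_M0 {e : Sym2 V} {v : V} (he : e ∈ M) (hve : v ∈ e) (hv : v ∈ Wset G M s) :
    e ∈ M0 G M s := ⟨he, v, hve, hv⟩

lemma supp_M0 (hM : IsMatching G M) (hs : s ∉ supp M)
    (NA : ¬∃ n f, IsAugmentingPath G M n f s) : supp (M0 G M s) = Wset G M s := by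
  ext v
  constructor
  · rintro ⟨e, ⟨he, u, hue, hu⟩, hve⟩
    exact edge_sub_Wset hM hs NA he hue hu v hve
  · intro hv
    obtain ⟨w, _, hvw⟩ := Wset_closed hM hs NA hv
    exact ⟨s(v, w), mem_M0 hvw (Sym2.mem_mk_left _ _) hv, Sym2.mem_mk_left _ _⟩

-- The forced alternating chain starting at `t`, alternating between edges of `A`
-- (at even steps) and of `B` (at odd steps).
open Classical in
noncomputable def chain (A B : Set (Sym2 V)) (t : V) : ℕ → Option V
  | 0 => some t
  | (k + 1) => (chain A B t k).bind fun v =>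
      if h : ∃ w, s(v, w) ∈ (if Even k then A else B) then some h.choose else none

section Chain

variable {A B : Set (Sym2 V)} {t : V}

lemma chain_zero : chain A B t 0 = some t := rfl

lemma chain_succ_some {k : ℕ} {w : V} (h : chain A B t (k + 1) = some w) :
    ∃ v, chain A B t k = some v ∧ s(v, w) ∈ (if Even k then A else B) := by
  rw [chain] at h
  rcases hc : chain A B t k with _ | v
  all_goals rw [hc] at h
  · exact absurd h (by simp)
  · simp only [Option.bind_some] at h
    by_cases hex : ∃ w', s(v, w') ∈ (if Even k then A else B)
    · rw [dif_pos hex] at h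
      exact ⟨v, rfl, (Option.some_inj.mp h) ▸ hex.choose_spec⟩
    · rw [dif_neg hex] at h
      exact absurd h (by simp)

lemma chain_le_some {j k : ℕ} (hjk : j ≤ k) {w : V} (h : chain A B t k = some w) :
    ∃ v, chain A B t j = some v := by
  obtain ⟨d, rfl⟩ : ∃ d, k = j + d := ⟨k - j, by omega⟩
  clear hjk
  induction d generalizing w with
  | zero => exact ⟨w, h⟩
  | succ d ih =>
    obtain ⟨v, hv, _⟩ := chain_succ_some h
    exact ih hv

lemma chain_none_succ {k : ℕ} (h : chain A B t k = none) : chain A B t (k + 1) = none := by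
  rw [chain, h]
  rfl

lemma chain_none_ge {k l : ℕ} (hkl : k ≤ l) (h : chain A B t k = none) :
    chain A B t l = none := by
  obtain ⟨d, rfl⟩ : ∃ d, l = k + d := ⟨l - k, by omega⟩
  induction d with
  | zero => exact h
  | succ d ih => exact chain_none_succ (ih (by omega))

variable (hAu : ∀ (v : V) e e', e ∈ A → e' ∈ A → v ∈ e → v ∈ e' → e = e')
  (hBu : ∀ (v : V) e e', e ∈ B → e' ∈ B → v ∈ e → v ∈ e' → e = e')
  (hnl : ∀ x : V, s(x, x) ∉ A ∧ s(x, x) ∉ B)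

include hAu hBu in
/-- Since steps are forced, if a suitable edge exists at `v`, the chain follows it. -/
lemma chain_forced {k : ℕ} {v w : V} (hc : chain A B t k = some v)
    (hw : s(v, w) ∈ (if Even k then A else B)) : chain A B t (k + 1) = some w := by
  rw [chain, hc]
  simp only [Option.bind_some]
  have hex : ∃ w', s(v, w') ∈ (if Even k then A else B) := ⟨w, hw⟩
  rw [dif_pos hex]
  have hspec := hex.choose_spec
  congr 1
  have huniq : ∀ (e e' : Sym2 V), e ∈ (if Even k then A else B) →
      e' ∈ (if Even k then A else B) → v ∈ e → v ∈ e' → e = e' := by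
    by_cases he : Even k
    · rw [if_pos he]; exact fun e e' h1 h2 => hAu v e e' h1 h2
    · rw [if_neg he]; exact fun e e' h1 h2 => hBu v e e' h1 h2
  have := huniq _ _ hspec hw (Sym2.mem_mk_left _ _) (Sym2.mem_mk_left _ _)
  rw [Sym2.eq_iff] at this
  rcases this with ⟨_, h2⟩ | ⟨h1, h2⟩
  · exact h2
  · exact h2.trans h1

lemma sym2_eq_at {a b c : V} (h : s(a, c) = s(b, c)) (hac : a ≠ c) : a = b := by
  rw [Sym2.eq_iff] at h
  rcases h with ⟨h1, _⟩ | ⟨h1, h2⟩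
  · exact h1
  · exact absurd h1 hac

include hAu hBu hnl in
/-- The chain never revisits a vertex. -/
lemma chain_inj (htB : ∀ e ∈ B, t ∉ e) :
    ∀ b a, a < b → ∀ x, chain A B t a = some x → chain A B t b = some x → False := by
  have hedge_ne : ∀ (u w : V), (s(u, w) ∈ A ∨ s(u, w) ∈ B) → u ≠ w := by
    rintro u w (hm | hm) rfl
    · exact (hnl u).1 hm
    · exact (hnl u).2 hm
  have hT_ne : ∀ (k : ℕ) (u w : V), s(u, w) ∈ (if Even k then A else B) → u ≠ w := by
    intro k u w hm
    by_cases hE : Even k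
    · rw [if_pos hE] at hm; exact hedge_ne u w (Or.inl hm)
    · rw [if_neg hE] at hm; exact hedge_ne u w (Or.inr hm)
  have hT_uniq : ∀ (k l : ℕ), (Even k ↔ Even l) → ∀ (x u w : V),
      s(u, x) ∈ (if Even k then A else B) → s(w, x) ∈ (if Even l then A else B) →
      s(u, x) = s(w, x) := by
    intro k l hkl x u w h1 h2
    by_cases hE : Even k
    · rw [if_pos hE] at h1; rw [if_pos (hkl.mp hE)] at h2
      exact hAu x _ _ h1 h2 (Sym2.mem_mk_right _ _) (Sym2.mem_mk_right _ _)
    · rw [if_neg hE] at h1; rw [if_neg (fun h => hE (hkl.mpr h))] at h2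
      exact hBu x _ _ h1 h2 (Sym2.mem_mk_right _ _) (Sym2.mem_mk_right _ _)
  intro b
  induction b using Nat.strong_induction_on with
  | _ b IH =>
    intro a hab x ha hb
    obtain ⟨b', rfl⟩ : ∃ b', b = b' + 1 := ⟨b - 1, by omega⟩
    obtain ⟨vb, hvb, hβ⟩ := chain_succ_some hb
    rcases Nat.eq_zero_or_pos a with rfl | hapos
    · -- a = 0 : x = t
      have hxt : t = x := by
        rw [chain_zero] at ha; exact Option.some_inj.mp ha
      by_cases hEb : Even b'
      · rw [if_pos hEb] at hβ
        rcases Nat.eq_zero_or_pos b' with rfl | hb'pos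
        · rw [chain_zero] at hvb
          have hvbt : t = vb := Option.some_inj.mp hvb
          exact hedge_ne vb x (Or.inl hβ) (hvbt ▸ hxt ▸ rfl)
        obtain ⟨x1, hx1⟩ := chain_le_some (show 1 ≤ b' by omega) hvb
        obtain ⟨v0, hv0, hα⟩ := chain_succ_some hx1
        rw [chain_zero] at hv0
        have hv0t : t = v0 := Option.some_inj.mp hv0
        rw [if_pos Even.zero] at hα
        -- s(vb, x) and s(x, x1) both in A at x = t = v0
        have hα' : s(x1, x) ∈ A := by
          rw [Sym2.eq_swap]; rwa [← hv0t, hxt] at hα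
        have heq := hAu x _ _ hβ hα' (Sym2.mem_mk_right _ _) (Sym2.mem_mk_right _ _)
        have hvbx1 : vb = x1 := sym2_eq_at heq (hedge_ne vb x (Or.inl hβ))
        have hb'1 : b' ≠ 1 := by rintro rfl; simp at hEb
        exact IH b' (by omega) 1 (by omega) vb (hvbx1 ▸ hx1) hvb
      · rw [if_neg hEb] at hβ
        exact htB _ hβ (hxt ▸ Sym2.mem_mk_right _ _)
    · -- a ≥ 1
      obtain ⟨a', rfl⟩ : ∃ a', a = a' + 1 := ⟨a - 1, by omega⟩
      obtain ⟨va, hva, hα⟩ := chain_succ_some ha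
      by_cases hpar : Even a' ↔ Even b'
      · -- same parity: the two arriving edges coincide
        have heq := hT_uniq a' b' hpar x va vb hα hβ
        have : va = vb := sym2_eq_at heq (hT_ne a' va x hα)
        exact IH b' (by omega) a' (by omega) va hva (this ▸ hvb)
      · -- opposite parity: look at the departing edge of x at position a'+2
        obtain ⟨y, hy⟩ := chain_le_some (show a' + 2 ≤ b' + 1 by omega) hb
        obtain ⟨x', hx', hγ⟩ := chain_succ_some hy
        have hxx : x = x' := by rw [ha] at hx'; exact Option.some_inj.mp hx'
        rw [← hxx] at hγ
        have hy_ne : y ≠ x := fun h => hT_ne (a' + 1) x y hγ h.symm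
        have heq := hT_uniq (a' + 1) b'
          (by rw [Nat.even_add_one]; tauto) x y vb (Sym2.eq_swap ▸ hγ) hβ
        have hyvb : y = vb := sym2_eq_at heq hy_ne
        rcases Nat.lt_or_ge (a' + 2) (b' + 1) with hlt | hge
        · -- y at position a'+2, vb at position b', a'+2 ≤ b'
          have hne : a' + 2 ≠ b' := by
            intro h
            apply hpar
            subst h
            simp [Nat.even_add]
          exact IH b' (by omega) (a' + 2) (by omega) y hy (hyvb ▸ hvb)
        · -- a'+2 = b'+1 : y = x, contradiction with hy_ne
          have : a' + 2 = b' + 1 := by omega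
          rw [this, hb] at hy
          exact hy_ne (Option.some_inj.mp hy).symm

end Chain

/-- The edges of the path `(n, f)`. -/
def pedges (n : ℕ∞) (f : ℕ → V) : Set (Sym2 V) :=
  {e | ∃ i : ℕ, ((i : ℕ∞) + 1) < n ∧ e = s(f i, f (i + 1))}

/-- The symmetric difference of `M2` and the edges of the path. -/
def flip (M2 : Set (Sym2 V)) (n : ℕ∞) (f : ℕ → V) : Set (Sym2 V) :=
  (M2 \ pedges n f) ∪ (pedges n f \ M2)

section PathFacts

variable {G : SimpleGraph V} {M2 : Set (Sym2 V)} {n : ℕ∞} {f : ℕ → V} {t : V}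

lemma enat_add2 (i : ℕ) : ((i : ℕ∞) + 2) = ((i + 2 : ℕ) : ℕ∞) := by push_cast; rfl

lemma enat_succ_lt_succ {i : ℕ} {n : ℕ∞} (h : ((i + 1 : ℕ) : ℕ∞) + 1 < n) :
    ((i : ℕ∞) + 1) < n := by
  refine lt_of_le_of_lt ?_ h
  rw [enat_cast_add_one i]
  exact_mod_cast Nat.le_succ (i + 1)

lemma aug_pattern (haug : IsAugmentingPath G M2 n f t) :
    ∀ i : ℕ, ((i : ℕ∞) + 1) < n → (s(f i, f (i + 1)) ∈ M2 ↔ Odd i) := by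
  intro i
  induction i with
  | zero =>
    intro _
    constructor
    · intro hmem
      exfalso
      apply haug.2.2.2.2.1
      refine ⟨_, hmem, ?_⟩
      rw [← haug.2.2.2.1]
      exact Sym2.mem_mk_left _ _
    · intro h
      exact absurd h (by simp)
  | succ i ih =>
    intro hi
    have hi2 : ((i : ℕ∞) + 2) < n := by
      rw [enat_add2]
      rw [enat_cast_add_one] at hi
      exact_mod_cast hi
    have halt := haug.2.1 i hi2
    have hIH := ih (enat_succ_lt_succ hi)
    rw [Nat.odd_add_one, ← hIH]
    rw [show i + 1 + 1 = i + 2 from rfl]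
    tauto

lemma aug_end_not_supp (haug : IsAugmentingPath G M2 n f t) {i : ℕ}
    (hi : (i : ℕ∞) < n) (hsupp : f i ∈ supp M2) : ((i : ℕ∞) + 1) < n := by
  refine enat_succ_lt_of_lt_of_ne hi (fun h => ?_)
  exact haug.2.2.2.2.2 i h hsupp

/-- An interior vertex of the path is matched by `M2`, with its matching edge on the path. -/
lemma aug_interior_edge (hM2 : IsMatching G M2) (haug : IsAugmentingPath G M2 n f t)
    {i : ℕ} (h1 : 1 ≤ i) (h2 : ((i : ℕ∞) + 1) < n) :
    (Odd i → s(f i, f (i + 1)) ∈ M2) ∧ (Even i → s(f (i - 1), f i) ∈ M2) := by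
  obtain ⟨j, rfl⟩ : ∃ j, i = j + 1 := ⟨i - 1, by omega⟩
  constructor
  · intro hodd
    exact (aug_pattern haug (j + 1) h2).mpr hodd
  · intro heven
    have hj1 : ((j : ℕ∞) + 1) < n := enat_succ_lt_succ h2
    have hjodd : Odd j := by rwa [Nat.even_add_one, Nat.not_even_iff_odd] at heven
    have := (aug_pattern haug j hj1).mpr hjodd
    simpa using this

lemma aug_interior_supp (hM2 : IsMatching G M2) (haug : IsAugmentingPath G M2 n f t)
    {i : ℕ} (h1 : 1 ≤ i) (h2 : ((i : ℕ∞) + 1) < n) : f i ∈ supp M2 := by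
  have h := aug_interior_edge hM2 haug h1 h2
  rcases Nat.even_or_odd i with he | ho
  · exact ⟨_, h.2 he, Sym2.mem_mk_right _ _⟩
  · exact ⟨_, h.1 ho, Sym2.mem_mk_left _ _⟩

/-- Any `M2`-edge containing a path vertex is a path edge. -/
lemma aug_m2_edge_on_path (hM2 : IsMatching G M2) (haug : IsAugmentingPath G M2 n f t)
    {i : ℕ} (hi : (i : ℕ∞) < n) (hsupp : f i ∈ supp M2) {e : Sym2 V} (he : e ∈ M2)
    (hfe : f i ∈ e) : e ∈ pedges n f := by
  have hi1 : ((i : ℕ∞) + 1) < n := aug_end_not_supp haug hi hsupp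
  have hipos : 1 ≤ i := by
    rcases Nat.eq_zero_or_pos i with rfl | h
    · exact absurd (haug.2.2.2.1 ▸ hsupp) haug.2.2.2.2.1
    · exact h
  have hedge := aug_interior_edge hM2 haug hipos hi1
  rcases Nat.even_or_odd i with hpar | hpar
  · have hm := hedge.2 hpar
    have heq := matching_unique hM2 he hm hfe (Sym2.mem_mk_right _ _)
    obtain ⟨j, rfl⟩ : ∃ j, i = j + 1 := ⟨i - 1, by omega⟩
    exact ⟨j, enat_succ_lt_succ hi1, by simpa using heq⟩
  · have hm := hedge.1 hpar
    have heq := matching_unique hM2 he hm hfe (Sym2.mem_mk_left _ _)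
    exact ⟨i, hi1, heq⟩

lemma pedges_mem_iff {e : Sym2 V} (hpath : IsPath G n f) (he : e ∈ pedges n f) {v : V}
    (hv : v ∈ e) : ∃ a : ℕ, ((a : ℕ∞) + 1) < n ∧ e = s(f a, f (a + 1)) ∧
      (v = f a ∨ v = f (a + 1)) := by
  obtain ⟨a, ha, rfl⟩ := he
  rcases Sym2.mem_iff.mp hv with h | h
  · exact ⟨a, ha, rfl, Or.inl h⟩
  · exact ⟨a, ha, rfl, Or.inr h⟩

lemma flip_sub_edgeSet (hM2 : IsMatching G M2) (hpath : IsPath G n f) :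
    flip M2 n f ⊆ G.edgeSet := by
  rintro e (⟨he, -⟩ | ⟨⟨i, hi, rfl⟩, -⟩)
  · exact hM2.1 he
  · rw [SimpleGraph.mem_edgeSet]
    exact hpath.2.2 i hi

/-- An edge of `M2` meeting a path vertex that lies off the path edges is impossible. -/
lemma flip_aux (hM2 : IsMatching G M2) (haug : IsAugmentingPath G M2 n f t)
    {v : V} {e e' : Sym2 V} (he : e ∈ M2 \ pedges n f) (he' : e' ∈ pedges n f \ M2)
    (hv : v ∈ e) (hv' : v ∈ e') : False := by
  obtain ⟨a, ha, rfl, hva⟩ := pedges_mem_iff haug.1 he'.1 hv'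
  have hsupp : v ∈ supp M2 := ⟨e, he.1, hv⟩
  rcases hva with rfl | rfl
  · exact he.2 (aug_m2_edge_on_path hM2 haug (enat_lt_of_succ_lt ha) hsupp he.1 hv)
  · have : ((a + 1 : ℕ) : ℕ∞) < n := by rw [← enat_cast_add_one]; exact ha
    exact he.2 (aug_m2_edge_on_path hM2 haug this hsupp he.1 hv)

lemma flip_matching (hM2 : IsMatching G M2) (haug : IsAugmentingPath G M2 n f t) :
    IsMatching G (flip M2 n f) := by
  refine ⟨flip_sub_edgeSet hM2 haug.1, ?_⟩
  have hinj := haug.1.2.1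
  rintro v e (⟨he, hep⟩ | hep) e' (⟨he', hep'⟩ | hep') hv hv'
  · exact matching_unique hM2 he he' hv hv'
  · exact (flip_aux hM2 haug ⟨he, hep⟩ hep' hv hv').elim
  · exact (flip_aux hM2 haug ⟨he', hep'⟩ hep hv' hv).elim
  · -- both are path edges not in M2
    obtain ⟨a, ha, rfl, hva⟩ := pedges_mem_iff haug.1 hep.1 hv
    obtain ⟨b, hb, rfl, hvb⟩ := pedges_mem_iff haug.1 hep'.1 hv'
    have han : (a : ℕ∞) < n := enat_lt_of_succ_lt ha
    have hbn : (b : ℕ∞) < n := enat_lt_of_succ_lt hb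
    have han1 : ((a + 1 : ℕ) : ℕ∞) < n := by rw [← enat_cast_add_one]; exact ha
    have hbn1 : ((b + 1 : ℕ) : ℕ∞) < n := by rw [← enat_cast_add_one]; exact hb
    have hpat := aug_pattern haug
    have hconsec : ∀ c : ℕ, ((c : ℕ∞) + 1) < n → (((c+1) : ℕ∞) + 1) < n →
        s(f c, f (c+1)) ∉ M2 → s(f (c+1), f (c+2)) ∉ M2 → False := by
      intro c hc hc1 hm1 hm2
      have p1 := hpat c hc
      have p2 := hpat (c + 1) (by rw [enat_cast_add_one] at hc1 ⊢; exact_mod_cast hc1)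
      rw [Nat.odd_iff] at p1 p2
      simp only [hm1, hm2, false_iff] at p1 p2
      omega
    rcases hva with hva | hva <;> rcases hvb with hvb | hvb
    · have : a = b := hinj a b han hbn (hva ▸ hvb ▸ rfl)
      rw [this]
    · have hab : a = b + 1 := hinj a (b + 1) han hbn1 (hva ▸ hvb ▸ rfl)
      exfalso
      subst hab
      refine hconsec b hb ?_ hep'.2 ?_
      · rw [enat_cast_add_one b]; exact ha
      · exact hep.2
    · have hab : a + 1 = b := hinj (a + 1) b han1 hbn (hva ▸ hvb ▸ rfl)
      exfalso
      subst hab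
      refine hconsec a ha ?_ hep.2 ?_
      · rw [enat_cast_add_one a]; exact hb
      · exact hep'.2
    · have : a = b := by
        have := hinj (a + 1) (b + 1) han1 hbn1 (hva ▸ hvb ▸ rfl)
        omega
      rw [this]

lemma flip_supp (hM2 : IsMatching G M2) (haug : IsAugmentingPath G M2 n f t)
    {v : V} (hsupp : v ∈ supp M2) : v ∈ supp (flip M2 n f) := by
  obtain ⟨e, he, hv⟩ := hsupp
  by_cases hep : e ∈ pedges n f
  · obtain ⟨a, ha, rfl, hva⟩ := pedges_mem_iff haug.1 hep hv
    have hodd : Odd a := (aug_pattern haug a ha).mp he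
    rcases hva with rfl | rfl
    · -- v = f a, a odd: the previous edge is free
      obtain ⟨c, rfl⟩ : ∃ c, a = c + 1 := ⟨a - 1, by rcases hodd with ⟨u, hu⟩; omega⟩
      have hc : ((c : ℕ∞) + 1) < n := enat_succ_lt_succ ha
      have hcfree : s(f c, f (c + 1)) ∉ M2 := by
        intro hmem
        have := (aug_pattern haug c hc).mp hmem
        rcases hodd with ⟨u, hu⟩; rcases this with ⟨u', hu'⟩; omega
      exact ⟨_, Or.inr ⟨⟨c, hc, rfl⟩, hcfree⟩, Sym2.mem_mk_right _ _⟩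
    · -- v = f (a+1): the next edge is free
      have hsupp1 : f (a + 1) ∈ supp M2 := ⟨_, he, Sym2.mem_mk_right _ _⟩
      have ha1 : ((a + 1 : ℕ) : ℕ∞) < n := by rw [← enat_cast_add_one]; exact ha
      have ha2 : ((a + 1 : ℕ) : ℕ∞) + 1 < n := aug_end_not_supp haug ha1 hsupp1
      have hfree : s(f (a + 1), f (a + 1 + 1)) ∉ M2 := by
        intro hmem
        have := (aug_pattern haug (a + 1) ha2).mp hmem
        rcases hodd with ⟨u, hu⟩; rcases this with ⟨u', hu'⟩; omega
      exact ⟨_, Or.inr ⟨⟨a + 1, ha2, rfl⟩, hfree⟩, Sym2.mem_mk_left _ _⟩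
  · exact ⟨e, Or.inl ⟨he, hep⟩, hv⟩

end PathFacts

end Aux

/-- **Key lemma**: any matching with support equal to the reachable set is independent. -/
lemma indep_of_supp_eq_Wset {G : SimpleGraph V} {M : Set (Sym2 V)} {s : V}
    (hM : IsMatching G M) (hs : s ∉ supp M)
    (NA : ¬∃ n f, IsAugmentingPath G M n f s)
    {M2 : Set (Sym2 V)} (hM2 : IsMatching G M2) (hsupp2 : supp M2 = Wset G M s) :
    IndepMatching G M2 := by
  classical
  refine ⟨hM2, ?_⟩
  rintro ⟨t, n, f, haug, ip, hipn, hipM⟩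
  have hf0 : f 0 = t := haug.2.2.2.1
  have hts : t ∉ supp M2 := haug.2.2.2.2.1
  have htW : t ∉ Wset G M s := hsupp2 ▸ hts
  have hpat := aug_pattern haug
  -- the path is proper, so it has at least three vertices
  have hipodd : Odd ip := (hpat ip hipn).mp hipM
  have h2n : ((1 : ℕ) : ℕ∞) + 1 < n := by
    refine lt_of_le_of_lt ?_ hipn
    have h1ip : (1 : ℕ) ≤ ip := by rcases hipodd with ⟨u, hu⟩; omega
    exact add_le_add_left (by exact_mod_cast h1ip) 1
  have h1n : ((0 : ℕ) : ℕ∞) + 1 < n := by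
    refine lt_of_le_of_lt ?_ h2n
    exact add_le_add_left (by exact_mod_cast Nat.zero_le 1) 1
  have hf1 : f 1 ∈ supp M2 := aug_interior_supp hM2 haug le_rfl h2n
  have hf1W : f 1 ∈ Wset G M s := hsupp2 ▸ hf1
  -- set up the flipped matching and the chain
  set N : Set (Sym2 V) := flip M2 n f with hNdef
  have hNM : IsMatching G N := flip_matching hM2 haug
  have hsuppM0 : supp (M0 G M s) = Wset G M s := supp_M0 hM hs NA
  set A : Set (Sym2 V) := N \ M0 G M s with hAdef
  set B : Set (Sym2 V) := M0 G M s \ N with hBdef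
  have hAu : ∀ (v : V) e e', e ∈ A → e' ∈ A → v ∈ e → v ∈ e' → e = e' :=
    fun v e e' h h' hv hv' => hNM.2 v e h.1 e' h'.1 hv hv'
  have hBu : ∀ (v : V) e e', e ∈ B → e' ∈ B → v ∈ e → v ∈ e' → e = e' :=
    fun v e e' h h' hv hv' => (M0_matching hM).2 v e h.1 e' h'.1 hv hv'
  have hnl : ∀ x : V, s(x, x) ∉ A ∧ s(x, x) ∉ B := by
    intro x
    constructor
    · intro hmem
      exact G.irrefl ((SimpleGraph.mem_edgeSet G).mp (hNM.1 hmem.1))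
    · intro hmem
      exact G.irrefl ((SimpleGraph.mem_edgeSet G).mp ((M0_matching hM).1 hmem.1))
  have htB : ∀ e ∈ B, t ∉ e := by
    intro e he hte
    exact htW (hsuppM0 ▸ (⟨e, he.1, hte⟩ : t ∈ supp (M0 G M s)))
  set C : ℕ → Option V := chain A B t with hCdef
  set Xv : ℕ → V := fun k => (C k).getD t with hXvdef
  have hXv : ∀ {k : ℕ} {v : V}, C k = some v → Xv k = v := by
    intro k v h
    simp only [hXvdef, h, Option.getD_some]
  -- the chain starts t, f 1
  have hC1 : C 1 = some (f 1) := by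
    have he0P : s(t, f 1) ∈ pedges n f := ⟨0, h1n, by rw [hf0]⟩
    have he0M2 : s(t, f 1) ∉ M2 := by
      intro hmem
      exact hts ⟨_, hmem, Sym2.mem_mk_left _ _⟩
    have he0N : s(t, f 1) ∈ N := Or.inr ⟨he0P, he0M2⟩
    have he0A : s(t, f 1) ∈ A := by
      refine ⟨he0N, fun hmem => ?_⟩
      exact htW (hsuppM0 ▸ (⟨_, hmem, Sym2.mem_mk_left _ _⟩ : t ∈ supp (M0 G M s)))
    exact chain_forced hAu hBu chain_zero (by rw [if_pos Even.zero]; exact he0A)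
  -- chain facts
  have cInj := chain_inj hAu hBu hnl htB
  have cW : ∀ k v, C k = some v → 1 ≤ k → (Even k ∨ ∃ w, C (k + 1) = some w) →
      v ∈ Wset G M s := by
    intro k v hk hk1 hcase
    rcases Nat.even_or_odd k with hE | hO
    · obtain ⟨k', rfl⟩ : ∃ k', k = k' + 1 := ⟨k - 1, by omega⟩
      obtain ⟨u, hu, hedge⟩ := chain_succ_some hk
      rw [if_neg (by rwa [Nat.even_add_one] at hE)] at hedge
      exact hsuppM0 ▸ (⟨_, hedge.1, Sym2.mem_mk_right _ _⟩ : v ∈ supp (M0 G M s))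
    · rcases hcase with hE | ⟨w, hw⟩
      · exact absurd hE (Nat.not_even_iff_odd.mpr hO)
      · obtain ⟨u, hu, hedge⟩ := chain_succ_some hw
        have hu' : C k = some u := hu
        rw [hk] at hu'
        rw [if_neg (Nat.not_even_iff_odd.mpr hO)] at hedge
        rw [Option.some_inj.mp hu']
        exact hsuppM0 ▸ (⟨_, hedge.1, Sym2.mem_mk_left _ _⟩ : u ∈ supp (M0 G M s))
  have cCont : ∀ k v, C k = some v → 1 ≤ k → v ∈ Wset G M s →
      ∃ w, C (k + 1) = some w := by
    intro k v hk hk1 hvW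
    obtain ⟨k', rfl⟩ : ∃ k', k = k' + 1 := ⟨k - 1, by omega⟩
    obtain ⟨u, hu, hedge⟩ := chain_succ_some hk
    rcases Nat.even_or_odd (k' + 1) with hE | hO
    · -- even position: arriving edge is in B; the N-edge of v continues
      have hk'odd : ¬Even k' := by rwa [Nat.even_add_one] at hE
      rw [if_neg hk'odd] at hedge
      have hvN : v ∈ supp N := flip_supp hM2 haug (hsupp2.symm ▸ hvW)
      obtain ⟨g, hg, hvg⟩ := hvN
      have hgA : g ∈ A := by
        refine ⟨hg, fun hgM0 => ?_⟩
        have heq := matching_unique (M0_matching hM) hgM0 hedge.1 hvg (Sym2.mem_mk_right _ _)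
        exact hedge.2 (heq ▸ hg)
      obtain ⟨w, rfl⟩ := Sym2.mem_iff_exists.mp hvg
      exact ⟨w, chain_forced hAu hBu hk (by rw [if_pos hE]; exact hgA)⟩
    · -- odd position: arriving edge is in A; the M0-edge of v continues
      have hk'even : Even k' := by rwa [Nat.odd_add_one, Nat.not_odd_iff_even] at hO
      rw [if_pos hk'even] at hedge
      have hvM0 : v ∈ supp (M0 G M s) := hsuppM0.symm ▸ hvW
      obtain ⟨g, hg, hvg⟩ := hvM0
      have hgB : g ∈ B := by
        refine ⟨hg, fun hgN => ?_⟩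
        have heq := hNM.2 v g hgN _ hedge.1 hvg (Sym2.mem_mk_right _ _)
        exact hedge.2 (heq ▸ hg)
      obtain ⟨w, rfl⟩ := Sym2.mem_iff_exists.mp hvg
      exact ⟨w, chain_forced hAu hBu hk
        (by rw [if_neg (Nat.not_even_iff_odd.mpr hO)]; exact hgB)⟩
  have cDead : ∀ k v, C k = some v → C (k + 1) = none → v ∉ Wset G M s := by
    intro k v hk hnone hvW
    rcases Nat.eq_zero_or_pos k with rfl | hk1
    · have : C 1 = none := hnone
      rw [hC1] at this
      exact Option.some_ne_none _ this
    · obtain ⟨w, hw⟩ := cCont k v hk hk1 hvW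
      rw [hw] at hnone
      exact Option.some_ne_none _ hnone
  have cEdge : ∀ k v w, C k = some v → C (k + 1) = some w →
      G.Adj v w ∧ (s(v, w) ∈ M ↔ Odd k) := by
    intro k v w hk hkw
    obtain ⟨u, hu, hedge⟩ := chain_succ_some hkw
    have hu' : C k = some u := hu
    rw [hk] at hu'
    obtain rfl : v = u := Option.some_inj.mp hu'
    clear hu'

    rcases Nat.even_or_odd k with hE | hO
    · rw [if_pos hE] at hedge
      constructor
      · exact (SimpleGraph.mem_edgeSet G).mp (hNM.1 hedge.1)
      · simp only [Nat.not_odd_iff_even.mpr hE, iff_false]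
        -- the edge has an endpoint in the reachable set, hence would be in M0
        intro hmem
        have hend : v ∈ Wset G M s ∨ w ∈ Wset G M s := by
          rcases Nat.eq_zero_or_pos k with rfl | hk1
          · have : C 1 = some w := hkw
            rw [hC1] at this
            right
            rw [← Option.some_inj.mp this]
            exact hf1W
          · left
            exact cW k v hu hk1 (Or.inl hE)
        rcases hend with h | h
        · exact hedge.2 (mem_M0 hmem (Sym2.mem_mk_left _ _) h)
        · exact hedge.2 (mem_M0 hmem (Sym2.mem_mk_right _ _) h)
    · rw [if_neg (Nat.not_even_iff_odd.mpr hO)] at hedge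
      constructor
      · exact (SimpleGraph.mem_edgeSet G).mp ((M0_matching hM).1 hedge.1)
      · simp only [hO, iff_true]
        exact M0_sub hedge.1
  have hCsome : ∀ {k : ℕ} {v : V}, C k = some v → C k = some (Xv k) := by
    intro k v h
    rw [hXv h]; exact h
  have spliceUp : ∀ (j c : ℕ) (q : ℕ → V), AltP G M s j q → C c = some (q j) →
      j % 2 = c % 2 → (∀ i, i < j → ¬∃ d, C d = some (q i)) → (j = 0 → c = 0) → False := by
    intro j c q hq hqj hpar hmin hj0
    by_cases hfin : ∃ m, C (m + 1) = none
    · -- the chain dies; build a finite alternating path witnessing Xv m ∈ Wset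
      set m := Nat.find hfin with hmdef
      have hmnone : C (m + 1) = none := Nat.find_spec hfin
      have hmmin : ∀ k, k < m → C (k + 1) ≠ none := fun k hk => Nat.find_min hfin hk
      have halive : ∀ k, k ≤ m → ∃ v, C k = some v := by
        intro k hk
        rcases Nat.eq_zero_or_pos k with rfl | h
        · exact ⟨t, chain_zero⟩
        · obtain ⟨k', rfl⟩ : ∃ k', k = k' + 1 := ⟨k - 1, by omega⟩
          rcases hCk : C (k' + 1) with _ | v
          · exact absurd hCk (hmmin k' (by omega))
          · exact ⟨v, rfl⟩
      have halive' : ∀ k, k ≤ m → C k = some (Xv k) := by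
        intro k hk
        obtain ⟨v, hv⟩ := halive k hk
        rcases hO : C k with _ | v'
        · rw [hO] at hv; exact absurd hv (by simp)
        · rw [hXv hO]
      have hcm : c ≤ m := by
        by_contra hcon
        have hnone' : C c = none := chain_none_ge (show m + 1 ≤ c by omega) hmnone
        rw [hnone'] at hqj
        exact absurd hqj (by simp)
      have hm1 : 1 ≤ m := by
        rcases Nat.eq_zero_or_pos m with hm0 | h
        · exfalso
          rw [hm0] at hmnone
          rw [hC1] at hmnone
          exact absurd hmnone (by simp)
        · exact h
      set L := j + (m - c) with hLdef
      set F : ℕ → V := fun i => if i < j then q i else Xv (c + (i - j)) with hFdef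
      have hFlt : ∀ i, i ≤ j → F i = q i := by
        intro i hi
        rcases Nat.lt_or_ge i j with h | h
        · show (if i < j then q i else Xv (c + (i - j))) = q i
          rw [if_pos h]
        · have hij : i = j := by omega
          subst hij
          show (if i < i then q i else Xv (c + (i - i))) = q i
          rw [if_neg (lt_irrefl i), Nat.sub_self, Nat.add_zero, hXv hqj]
      have hFge : ∀ i, j ≤ i → F i = Xv (c + (i - j)) := by
        intro i hi
        rcases Nat.lt_or_ge i j with h | h
        · omega
        · show (if i < j then q i else Xv (c + (i - j))) = Xv (c + (i - j))
          rw [if_neg (by omega : ¬ i < j)]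
      have hAltP : AltP G M s L F := by
        refine ⟨?_, ?_, ?_, ?_⟩
        · rw [hFlt 0 (Nat.zero_le _)]; exact hq.1
        · intro i i' hi hi' heq
          rcases Nat.lt_or_ge i j with h | h <;> rcases Nat.lt_or_ge i' j with h' | h'
          · exact hq.2.1 i i' (by omega) (by omega) (by rwa [hFlt i (by omega), hFlt i' (by omega)] at heq)
          · exfalso
            rw [hFlt i (by omega), hFge i' h'] at heq
            refine hmin i h ⟨c + (i' - j), ?_⟩
            have hh := halive' (c + (i' - j)) (by omega)
            rw [← heq] at hh
            exact hh
          · exfalso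
            rw [hFlt i' (by omega), hFge i h] at heq
            refine hmin i' h' ⟨c + (i - j), ?_⟩
            have hh := halive' (c + (i - j)) (by omega)
            rw [heq] at hh
            exact hh
          · rw [hFge i h, hFge i' h'] at heq
            have hp : c + (i - j) = c + (i' - j) := by
              by_contra hne
              rcases Nat.lt_or_ge (c + (i - j)) (c + (i' - j)) with hlt | hge
              · refine cInj (c + (i' - j)) (c + (i - j)) hlt (Xv (c + (i' - j))) ?_
                  (halive' (c + (i' - j)) (by omega))
                have hh := halive' (c + (i - j)) (by omega)
                rw [heq] at hh
                exact hh
              · refine cInj (c + (i - j)) (c + (i' - j)) (by omega) (Xv (c + (i - j))) ?_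
                  (halive' (c + (i - j)) (by omega))
                have hh := halive' (c + (i' - j)) (by omega)
                rw [← heq] at hh
                exact hh
            omega
        · intro i hi
          rcases Nat.lt_or_ge i j with h | h
          · rw [hFlt i (by omega), hFlt (i + 1) (by omega)]
            exact hq.2.2.1 i h
          · rw [hFge i h, hFge (i + 1) (by omega)]
            have harith : c + (i + 1 - j) = c + (i - j) + 1 := by omega
            rw [harith]
            exact (cEdge _ _ _ (halive' _ (by omega)) (halive' _ (by omega))).1
        · intro i hi
          rcases Nat.lt_or_ge i j with h | h
          · rw [hFlt i (by omega), hFlt (i + 1) (by omega)]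
            exact hq.2.2.2 i h
          · rw [hFge i h, hFge (i + 1) (by omega)]
            have harith : c + (i + 1 - j) = c + (i - j) + 1 := by omega
            rw [harith]
            rw [(cEdge _ _ _ (halive' _ (by omega)) (halive' _ (by omega))).2]
            rw [Nat.odd_iff, Nat.odd_iff]
            omega
      have hL1 : 1 ≤ L := by
        rcases Nat.eq_zero_or_pos j with hj | hj
        · have := hj0 hj
          omega
        · omega
      have hmem := mem_Wset_of_altp hAltP hL1
      rw [hFge L (by omega), show c + (L - j) = m by omega] at hmem
      exact cDead m _ (halive' m le_rfl) hmnone hmem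
    · -- the chain is infinite: build an infinite augmenting path from s
      push_neg at hfin
      have halive' : ∀ k, C k = some (Xv k) := by
        intro k
        rcases hO : C k with _ | v
        · exfalso
          rcases Nat.eq_zero_or_pos k with rfl | h
          · have h0 : C 0 = some t := chain_zero
            rw [h0] at hO
            exact absurd hO (by simp)
          · obtain ⟨k', rfl⟩ : ∃ k', k = k' + 1 := ⟨k - 1, by omega⟩
            exact hfin k' hO
        · rw [hXv hO]
      set F : ℕ → V := fun i => if i < j then q i else Xv (c + (i - j)) with hFdef
      have hFlt : ∀ i, i ≤ j → F i = q i := by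
        intro i hi
        rcases Nat.lt_or_ge i j with h | h
        · show (if i < j then q i else Xv (c + (i - j))) = q i
          rw [if_pos h]
        · have hij : i = j := by omega
          subst hij
          show (if i < i then q i else Xv (c + (i - i))) = q i
          rw [if_neg (lt_irrefl i), Nat.sub_self, Nat.add_zero, hXv hqj]
      have hFge : ∀ i, j ≤ i → F i = Xv (c + (i - j)) := by
        intro i hi
        rcases Nat.lt_or_ge i j with h | h
        · omega
        · show (if i < j then q i else Xv (c + (i - j))) = Xv (c + (i - j))
          rw [if_neg (by omega : ¬ i < j)]
      refine NA (altp_inf_to_aug (q := F) (by rw [hFlt 0 (Nat.zero_le _)]; exact hq.1) ?_ ?_ ?_ hs)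
      · intro i i' heq
        rcases Nat.lt_or_ge i j with h | h <;> rcases Nat.lt_or_ge i' j with h' | h'
        · exact hq.2.1 i i' (by omega) (by omega) (by rwa [hFlt i (by omega), hFlt i' (by omega)] at heq)
        · exfalso
          rw [hFlt i (by omega), hFge i' h'] at heq
          refine hmin i h ⟨c + (i' - j), ?_⟩
          have hh := halive' (c + (i' - j))
          rw [← heq] at hh
          exact hh
        · exfalso
          rw [hFlt i' (by omega), hFge i h] at heq
          refine hmin i' h' ⟨c + (i - j), ?_⟩
          have hh := halive' (c + (i - j))
          rw [heq] at hh
          exact hh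
        · rw [hFge i h, hFge i' h'] at heq
          have hp : c + (i - j) = c + (i' - j) := by
            by_contra hne
            rcases Nat.lt_or_ge (c + (i - j)) (c + (i' - j)) with hlt | hge
            · refine cInj (c + (i' - j)) (c + (i - j)) hlt (Xv (c + (i' - j))) ?_
                (halive' (c + (i' - j)))
              have hh := halive' (c + (i - j))
              rw [heq] at hh
              exact hh
            · refine cInj (c + (i - j)) (c + (i' - j)) (by omega) (Xv (c + (i - j))) ?_
                (halive' (c + (i - j)))
              have hh := halive' (c + (i' - j))
              rw [← heq] at hh
              exact hh
          omega
      · intro i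
        rcases Nat.lt_or_ge i j with h | h
        · rw [hFlt i (by omega), hFlt (i + 1) (by omega)]
          exact hq.2.2.1 i h
        · rw [hFge i h, hFge (i + 1) (by omega)]
          have harith : c + (i + 1 - j) = c + (i - j) + 1 := by omega
          rw [harith]
          exact (cEdge _ _ _ (halive' _) (halive' _)).1
      · intro i
        rcases Nat.lt_or_ge i j with h | h
        · rw [hFlt i (by omega), hFlt (i + 1) (by omega)]
          exact hq.2.2.2 i h
        · rw [hFge i h, hFge (i + 1) (by omega)]
          have harith : c + (i + 1 - j) = c + (i - j) + 1 := by omega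
          rw [harith]
          rw [(cEdge _ _ _ (halive' _) (halive' _)).2]
          rw [Nat.odd_iff, Nat.odd_iff]
          omega
  have spliceDown : ∀ (j c : ℕ) (q : ℕ → V), AltP G M s j q → C c = some (q j) →
      j % 2 ≠ c % 2 → (∀ i, i < j → ¬∃ d, C d = some (q i)) → 1 ≤ j + c → False := by
    intro j c q hq hqj hpar hmin hL1
    have halive' : ∀ k, k ≤ c → C k = some (Xv k) := by
      intro k hk
      obtain ⟨v, hv⟩ := chain_le_some hk hqj
      have hv' : C k = some v := hv
      rcases hO : C k with _ | v'
      · rw [hO] at hv'; exact absurd hv' (by simp)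
      · rw [hXv hO]
    set L := j + c with hLdef
    set F : ℕ → V := fun i => if i < j then q i else Xv (c - (i - j)) with hFdef
    have hFlt : ∀ i, i ≤ j → F i = q i := by
      intro i hi
      rcases Nat.lt_or_ge i j with h | h
      · show (if i < j then q i else Xv (c - (i - j))) = q i
        rw [if_pos h]
      · have hij : i = j := by omega
        subst hij
        show (if i < i then q i else Xv (c - (i - i))) = q i
        rw [if_neg (lt_irrefl i), Nat.sub_self, Nat.sub_zero, hXv hqj]
    have hFge : ∀ i, j ≤ i → F i = Xv (c - (i - j)) := by
      intro i hi
      rcases Nat.lt_or_ge i j with h | h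
      · omega
      · show (if i < j then q i else Xv (c - (i - j))) = Xv (c - (i - j))
        rw [if_neg (by omega : ¬ i < j)]
    have hAltP : AltP G M s L F := by
      refine ⟨?_, ?_, ?_, ?_⟩
      · rw [hFlt 0 (Nat.zero_le _)]; exact hq.1
      · intro i i' hi hi' heq
        rcases Nat.lt_or_ge i j with h | h <;> rcases Nat.lt_or_ge i' j with h' | h'
        · exact hq.2.1 i i' (by omega) (by omega)
            (by rwa [hFlt i (by omega), hFlt i' (by omega)] at heq)
        · exfalso
          rw [hFlt i (by omega), hFge i' h'] at heq
          refine hmin i h ⟨c - (i' - j), ?_⟩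
          have hh := halive' (c - (i' - j)) (by omega)
          rw [← heq] at hh
          exact hh
        · exfalso
          rw [hFlt i' (by omega), hFge i h] at heq
          refine hmin i' h' ⟨c - (i - j), ?_⟩
          have hh := halive' (c - (i - j)) (by omega)
          rw [heq] at hh
          exact hh
        · rw [hFge i h, hFge i' h'] at heq
          have hp : c - (i - j) = c - (i' - j) := by
            by_contra hne
            rcases Nat.lt_or_ge (c - (i - j)) (c - (i' - j)) with hlt | hge
            · refine cInj (c - (i' - j)) (c - (i - j)) hlt (Xv (c - (i' - j))) ?_
                (halive' (c - (i' - j)) (by omega))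
              have hh := halive' (c - (i - j)) (by omega)
              rw [heq] at hh
              exact hh
            · refine cInj (c - (i - j)) (c - (i' - j)) (by omega) (Xv (c - (i - j))) ?_
                (halive' (c - (i - j)) (by omega))
              have hh := halive' (c - (i' - j)) (by omega)
              rw [← heq] at hh
              exact hh
          omega
      · intro i hi
        rcases Nat.lt_or_ge i j with h | h
        · rw [hFlt i (by omega), hFlt (i + 1) (by omega)]
          exact hq.2.2.1 i h
        · rw [hFge i h, hFge (i + 1) (by omega)]
          have harith : c - (i - j) = (c - (i + 1 - j)) + 1 := by omega
          rw [harith]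
          exact ((cEdge _ _ _ (halive' (c - (i + 1 - j)) (by omega))
            (by rw [← harith]; exact halive' (c - (i - j)) (by omega))).1).symm
      · intro i hi
        rcases Nat.lt_or_ge i j with h | h
        · rw [hFlt i (by omega), hFlt (i + 1) (by omega)]
          exact hq.2.2.2 i h
        · rw [hFge i h, hFge (i + 1) (by omega)]
          have harith : c - (i - j) = (c - (i + 1 - j)) + 1 := by omega
          rw [harith, Sym2.eq_swap]
          rw [(cEdge _ _ _ (halive' (c - (i + 1 - j)) (by omega))
            (by rw [← harith]; exact halive' (c - (i - j)) (by omega))).2]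
          rw [Nat.odd_iff, Nat.odd_iff]
          omega
    have hmem := mem_Wset_of_altp hAltP hL1
    rw [hFge L (by omega), show c - (L - j) = 0 by omega] at hmem
    have h0 : C 0 = some t := chain_zero
    rw [hXv h0] at hmem
    exact htW hmem
  have hq0 : AltP G M s 0 (fun _ => s) :=
    ⟨rfl, fun i j hi hj _ => by omega, fun i hi => absurd hi (by omega),
     fun i hi => absurd hi (by omega)⟩
  by_cases hsC : ∃ k, C k = some s
  · obtain ⟨k, hk⟩ := hsC
    rcases Nat.eq_zero_or_pos k with rfl | hk1
    · -- t = s : the chain itself is an alternating path from s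
      have h0 : C 0 = some t := chain_zero
      rw [h0] at hk
      have hts' : t = s := Option.some_inj.mp hk
      refine spliceUp 0 0 (fun _ => s) hq0 ?_ rfl (fun i hi => absurd hi (by omega))
        (fun _ => rfl)
      rw [← hts']
      exact chain_zero
    · -- s occurs on the chain at a positive position: reverse the chain
      have hodd : Odd k := by
        rcases Nat.even_or_odd k with hE | hO
        · exact absurd (cW k s hk hk1 (Or.inl hE)) s_not_Wset
        · exact hO
      refine spliceDown 0 k (fun _ => s) hq0 hk ?_ (fun i hi => absurd hi (by omega)) (by omega)
      rw [Nat.odd_iff] at hodd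
      omega
  · -- s is not on the chain: splice a path from s to the chain
    obtain ⟨jm, q, hqq, hjm1, hqjm⟩ := hf1W
    have hEx : ∃ i, ∃ d, C d = some (q i) := ⟨jm, 1, by rw [hqjm]; exact hC1⟩
    obtain ⟨j, hjle, ⟨c, hc⟩, hmin⟩ : ∃ j, j ≤ jm ∧ (∃ d, C d = some (q j)) ∧
        ∀ i, i < j → ¬∃ d, C d = some (q i) :=
      ⟨Nat.find hEx, Nat.find_le ⟨1, by rw [hqjm]; exact hC1⟩, Nat.find_spec hEx,
       fun i hi => Nat.find_min hEx hi⟩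
    have hj1 : 1 ≤ j := by
      rcases Nat.eq_zero_or_pos j with hj0 | h
      · exfalso
        apply hsC
        refine ⟨c, ?_⟩
        rw [hj0, hqq.1] at hc
        exact hc
      · exact h
    obtain ⟨j', rfl⟩ : ∃ j', j = j' + 1 := ⟨j - 1, by omega⟩
    have hqtrunc : AltP G M s (j' + 1) q := hqq.trunc hjle
    have hqjW : q (j' + 1) ∈ Wset G M s := mem_Wset_of_altp hqtrunc hj1
    have hc1 : 1 ≤ c := by
      rcases Nat.eq_zero_or_pos c with rfl | h
      · exfalso
        have h0 : C 0 = some t := chain_zero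
        rw [h0] at hc
        rw [Option.some_inj.mp hc] at htW
        exact htW hqjW
      · exact h
    have hcont : ∃ w, C (c + 1) = some w := cCont c (q (j' + 1)) hc hc1 hqjW
    have hne_qj : q j' ≠ q (j' + 1) := by
      intro h
      have := hqq.2.1 j' (j' + 1) (by omega) (by omega) h
      omega
    -- the last edge of the prefix is not in M
    have hieps : s(q j', q (j' + 1)) ∉ M := by
      intro hMeps
      rcases Nat.even_or_odd c with hcE | hcO
      · -- c even : the arriving chain edge at position c is the M-edge of q (j'+1)
        obtain ⟨c', rfl⟩ : ∃ c', c = c' + 1 := ⟨c - 1, by omega⟩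
        obtain ⟨u, hu, hedge⟩ := chain_succ_some hc
        rw [if_neg (by rwa [Nat.even_add_one] at hcE)] at hedge
        have hδM : s(u, q (j' + 1)) ∈ M := M0_sub hedge.1
        have heq := matching_unique hM hMeps hδM (Sym2.mem_mk_right _ _) (Sym2.mem_mk_right _ _)
        have huq : q j' = u := sym2_eq_at heq hne_qj
        refine hmin j' (by omega) ⟨c', ?_⟩
        have hu' : C c' = some u := hu
        rw [← huq] at hu'
        exact hu'
      · -- c odd : the departing chain edge at position c is the M-edge of q (j'+1)
        obtain ⟨w, hw⟩ := hcont
        obtain ⟨u, hu, hedge⟩ := chain_succ_some hw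
        have hu' : C c = some u := hu
        rw [hc] at hu'
        have huq : q (j' + 1) = u := Option.some_inj.mp hu'
        rw [if_neg (Nat.not_even_iff_odd.mpr hcO)] at hedge
        have hδM : s(u, w) ∈ M := M0_sub hedge.1
        have heq := matching_unique hM hMeps hδM (Sym2.mem_mk_right _ _)
          (huq ▸ Sym2.mem_mk_left _ _)
        have hqw : q j' = w := by
          rw [← huq] at heq
          rw [Sym2.eq_iff] at heq
          rcases heq with ⟨h1, h2⟩ | ⟨h1, h2⟩
          · exact absurd h1 hne_qj
          · exact h1
        refine hmin j' (by omega) ⟨c + 1, ?_⟩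
        rw [← hqw] at hw
        exact hw
    have hj'even : ¬Odd j' := fun ho => hieps ((hqtrunc.2.2.2 j' (by omega)).mpr ho)
    rw [Nat.odd_iff] at hj'even
    rcases Nat.even_or_odd c with hcE | hcO
    · rw [Nat.even_iff] at hcE
      exact spliceDown (j' + 1) c q hqtrunc hc (by omega) hmin (by omega)
    · rw [Nat.odd_iff] at hcO
      exact spliceUp (j' + 1) c q hqtrunc hc (by omega) hmin (by omega)

/-- `G` satisfies condition (A) iff for every independent subgraph `W`
and every vertex `s ∉ W` there is a neighbor of `s` outside `W`. -/
theorem conditionA_iff_neighbor_outside_indepSubgraphs {V : Type*} [Countable V]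
    (G : SimpleGraph V) :
    ConditionA G ↔
      ∀ W : Set V, IndepSubgraph G W → ∀ s : V, s ∉ W →
        ∃ v : V, v ∉ W ∧ G.Adj s v := by
  constructor
  · -- forward direction
    intro CA W hW s hsW
    obtain ⟨⟨M, hM, hsupp⟩, hall⟩ := hW
    have hsM : s ∉ supp M := by rw [hsupp]; exact hsW
    obtain ⟨n, f, haug⟩ := CA M hM s hsM
    have hIM := hall M hM hsupp
    have h1n : 1 < n := haug.2.2.1
    -- the augmenting path must have exactly two vertices
    have hn2 : n = 2 := by
      by_contra hne
      have h2le : (2 : ℕ∞) ≤ n := by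
        have := Order.add_one_le_of_lt h1n
        rwa [show (1 : ℕ∞) + 1 = 2 by norm_num] at this
      have h2n : (2 : ℕ∞) < n := lt_of_le_of_ne h2le (Ne.symm hne)
      have h1n' : ((1 : ℕ) : ℕ∞) + 1 < n := by
        rw [show ((1 : ℕ) : ℕ∞) + 1 = 2 by norm_num]
        exact h2n
      have he1 : s(f 1, f (1 + 1)) ∈ M := by
        refine (aug_pattern haug 1 h1n').mpr (by norm_num)
      exact hIM.2 ⟨s, n, f, haug, 1, h1n', he1⟩
    refine ⟨f 1, ?_, ?_⟩
    · have := haug.2.2.2.2.2 1 (by rw [hn2]; norm_num)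
      rw [hsupp] at this
      exact this
    · have hadj := haug.1.2.2 0 (by rw [hn2]; norm_num)
      rw [show f 0 = s from haug.2.2.2.1] at hadj
      exact hadj
  · -- backward direction
    intro H M hM s hsM
    by_contra NA
    have hWindep : IndepSubgraph G (Wset G M s) := by
      constructor
      · exact ⟨M0 G M s, M0_matching hM, supp_M0 hM hsM NA⟩
      · intro M2 hM2 hsupp2
        exact indep_of_supp_eq_Wset hM hsM NA hM2 hsupp2
    obtain ⟨v, hvW, hadj⟩ := H (Wset G M s) hWindep s s_not_Wset
    exact hvW (adj_mem_Wset hM hsM hadj)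

end PaperMatchings
end
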